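/- Let x, y be a heavy pair such that y lies on π(s, u_{H_x}) strictly above r(x) (i.e., y is a proper ancestor of r(x)) and the tree edge (y, y_h) lies on π_x(s, H_x). Define Ĉ(x,y) as the union of all components C ∈ C_x such that the tree edge (y,y_h) lies on π_x(s,C). Then G \ {x,y} is connected if and only if there is an edge of G from a vertex of Ĉ(x,y) ∪ H_y to a vertex of V \ (Ĉ(x,y) ∪ H_y ∪ {x,y}). -/
import Mathlib


/-- A rooted spanning tree of the graph `G`, given by a root and a parent function:
the root is a fixed point of `parent`, every vertex reaches the root by iterating
`parent`, and every (parent, child) pair is an edge of `G`. -/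
structure RSTree {V : Type*} (G : SimpleGraph V) where
  root : V
  parent : V → V
  parent_root : parent root = root
  reaches : ∀ v : V, ∃ n : ℕ, parent^[n] v = root
  adj : ∀ v : V, v ≠ root → G.Adj (parent v) v

namespace RSTree

variable {V : Type*} {G : SimpleGraph V}

/-- `u` is an ancestor of `v` in `T`, i.e. `u` lies on the tree path `π(root, v)`;
includes `u = v`. -/
def Anc (T : RSTree G) (u v : V) : Prop := ∃ n : ℕ, T.parent^[n] v = u

/-- The vertex set `V(T_x)` of the subtree of `T` rooted at `x`. -/
def sub (T : RSTree G) (x : V) : Set V := {v | T.Anc x v}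

/-- `c` is a child of `v` in `T`. -/
def IsChild (T : RSTree G) (c v : V) : Prop := T.parent c = v ∧ c ≠ v

/-- `V_x = V(T_x) \ {x}`. -/
def Vx (T : RSTree G) (x : V) : Set V := {v | T.Anc x v ∧ v ≠ x}

end RSTree

/-- `v` and `w` are connected by a walk of `G` all of whose vertices lie in `S`
(i.e. they lie in the same connected component of the induced subgraph `G[S]`). -/
def ReachableWithin {V : Type*} (G : SimpleGraph V) (S : Set V) (v w : V) : Prop :=
  ∃ p : G.Walk v w, ∀ u ∈ p.support, u ∈ S

/-- `C` is (the vertex set of) a connected component of the induced subgraph `G[S]`. -/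
def IsCompOf {V : Type*} (G : SimpleGraph V) (S : Set V) (C : Set V) : Prop :=
  ∃ v ∈ S, C = {w | ReachableWithin G S v w}

/-- The connected component of `v` in the induced subgraph `G[S]` (as a vertex set). -/
def CompOfVert {V : Type*} (G : SimpleGraph V) (S : Set V) (v : V) : Set V :=
  {w | ReachableWithin G S v w}

/-- The vertex set of the path `π_x(s,C) = π(s, u_C) ∘ (u_C, v_C)` associated to a
component `C` (given the choice functions `uc, vc` of the edge `(u_C, v_C)`): it
consists of all ancestors of `u_C` together with `v_C`. -/
def CompPath {V : Type*} {G : SimpleGraph V} (T : RSTree G)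
    (uc vc : Set V → V) (C : Set V) : Set V :=
  {w | T.Anc w (uc C)} ∪ {vc C}

/-- `C ∈ 𝒞_x` is pseudo-`y`-sensitive: the path `π_x(s,C)` contains a tree edge
`(y, y')` from `y` to a child `y'` of `y` such that `x` does not lie on
`π_y(s, C_{y,y'})`. Here `ucx, vcx` are the edge choices for components of `G[V_x]`
and `ucy, vcy` those for components of `G[V_y]`. -/
def PseudoSens {V : Type*} {G : SimpleGraph V} (T : RSTree G)
    (ucx vcx ucy vcy : Set V → V) (x y : V) (C : Set V) : Prop :=
  ∃ y', T.IsChild y' y ∧ T.Anc y' (ucx C) ∧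
    x ∉ CompPath T ucy vcy (CompOfVert G (T.Vx y) y')

/-- `C ∈ 𝒞_x` is fully-`y`-sensitive: `y` lies on `π_x(s,C)` (i.e. `C` is
`y`-sensitive) and `C` is not pseudo-`y`-sensitive. -/
def FullySens {V : Type*} {G : SimpleGraph V} (T : RSTree G)
    (ucx vcx ucy vcy : Set V → V) (x y : V) (C : Set V) : Prop :=
  y ∈ CompPath T ucx vcx C ∧ ¬ PseudoSens T ucx vcx ucy vcy x y C

/-- `hch` is a valid designation of heavy children: for every non-leaf vertex `v`,
`hch v` is a child of `v` whose subtree has the maximum number of vertices among all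
children of `v`. -/
def HchValid {V : Type*} {G : SimpleGraph V} (T : RSTree G) (hch : V → V) : Prop :=
  ∀ v : V, (∃ c, T.IsChild c v) →
    T.IsChild (hch v) v ∧ ∀ c, T.IsChild c v → (T.sub c).ncard ≤ (T.sub (hch v)).ncard

/-- The family `uc, vc` of edge choices is valid: for every `x ≠ s` with `G \ {x}`
connected and every connected component `C` of `G[V_x]`, `(uc x C, vc x C)` is an edge
of `G` with `vc x C ∈ C` and `uc x C ∉ V(T_x)`. -/
def GoodChoice {V : Type*} (G : SimpleGraph V) (T : RSTree G)
    (uc vc : V → Set V → V) : Prop :=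
  ∀ x : V, x ≠ T.root → (G.induce (({x} : Set V)ᶜ)).Connected →
    ∀ C, IsCompOf G (T.Vx x) C →
      G.Adj (uc x C) (vc x C) ∧ vc x C ∈ C ∧ uc x C ∉ T.sub x

/-- `x, y` is a heavy pair: an independent pair, both non-leaves of `T`, both `≠ s`,
with `G \ {x}` and `G \ {y}` connected, such that every fully-`y`-sensitive component
`C ∈ FS(x,y)` has the tree edge `(y, y_h)` on `π_x(s,C)` and every fully-`x`-sensitive
component `C ∈ FS(y,x)` has the tree edge `(x, x_h)` on `π_y(s,C)`. -/
def HeavyPair {V : Type*} {G : SimpleGraph V} (T : RSTree G) (hch : V → V)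
    (uc vc : V → Set V → V) (x y : V) : Prop :=
  x ≠ T.root ∧ y ≠ T.root ∧ ¬ T.Anc x y ∧ ¬ T.Anc y x ∧
  T.IsChild (hch x) x ∧ T.IsChild (hch y) y ∧
  (G.induce (({x} : Set V)ᶜ)).Connected ∧ (G.induce (({y} : Set V)ᶜ)).Connected ∧
  (∀ C, IsCompOf G (T.Vx x) C → FullySens T (uc x) (vc x) (uc y) (vc y) x y C →
    T.Anc (hch y) (uc x C)) ∧
  (∀ C, IsCompOf G (T.Vx y) C → FullySens T (uc y) (vc y) (uc x) (vc x) y x C →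
    T.Anc (hch x) (uc y C))

section Aux

variable {V : Type*} {G : SimpleGraph V}

namespace RSTree

variable (T : RSTree G)

lemma iterate_root (n : ℕ) : T.parent^[n] T.root = T.root := by
  induction n with
  | zero => rfl
  | succ n ih => rw [Function.iterate_succ_apply, T.parent_root, ih]

lemma anc_refl (u : V) : T.Anc u u := ⟨0, rfl⟩

lemma anc_root (v : V) : T.Anc T.root v := T.reaches v

lemma anc_trans {u v w : V} (h1 : T.Anc u v) (h2 : T.Anc w u) : T.Anc w v := by
  obtain ⟨n, hn⟩ := h1; obtain ⟨m, hm⟩ := h2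
  exact ⟨m + n, by rw [Function.iterate_add_apply, hn, hm]⟩

lemma eq_root_of_anc_root {u : V} (h : T.Anc u T.root) : u = T.root := by
  obtain ⟨n, hn⟩ := h; rw [T.iterate_root] at hn; exact hn.symm

lemma eq_root_of_iterate {v : V} {k : ℕ} (hk : k ≠ 0) (h : T.parent^[k] v = v) :
    v = T.root := by
  obtain ⟨N, hN⟩ := T.reaches v
  have key : ∀ q : ℕ, T.parent^[k * q] v = v := by
    intro q; induction q with
    | zero => rfl
    | succ q ih => rw [Nat.mul_succ, Function.iterate_add_apply, h, ih]
  have h1 : N ≤ k * N := Nat.le_mul_of_pos_left N (Nat.pos_of_ne_zero hk)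
  have h2 : T.parent^[k * N] v = T.root := by
    have h3 := congrArg (T.parent^[k * N - N]) hN
    rw [← Function.iterate_add_apply, Nat.sub_add_cancel h1, T.iterate_root] at h3
    exact h3
  rw [key N] at h2; exact h2

lemma anc_antisymm {u v : V} (h1 : T.Anc u v) (h2 : T.Anc v u) : u = v := by
  obtain ⟨n, hn⟩ := h1; obtain ⟨m, hm⟩ := h2
  rcases Nat.eq_zero_or_pos (n + m) with h | h
  · have hn0 : n = 0 := by omega
    subst hn0; exact hn.symm
  · have hu : T.parent^[n + m] u = u := by
      rw [Function.iterate_add_apply, hm, hn]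
    have hur : u = T.root := T.eq_root_of_iterate (by omega) hu
    have hvr : v = T.root := by
      rw [← hm, hur, T.iterate_root]
    rw [hur, hvr]

lemma anc_total {u v w : V} (h1 : T.Anc u w) (h2 : T.Anc v w) :
    T.Anc u v ∨ T.Anc v u := by
  obtain ⟨n, hn⟩ := h1; obtain ⟨m, hm⟩ := h2
  rcases le_total n m with h | h
  · right
    refine ⟨m - n, ?_⟩
    rw [← hn, ← Function.iterate_add_apply, Nat.sub_add_cancel h, hm]
  · left
    refine ⟨n - m, ?_⟩
    rw [← hm, ← Function.iterate_add_apply, Nat.sub_add_cancel h, hn]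

lemma anc_of_child {c v : V} (h : T.IsChild c v) : T.Anc v c :=
  ⟨1, by simp [h.1]⟩

lemma anc_of_child_anc {c p w : V} (hc : T.IsChild c p) (hw : T.Anc c w) :
    T.Anc p w :=
  T.anc_trans hw (T.anc_of_child hc)

lemma not_anc_child {c p : V} (hc : T.IsChild c p) (h : T.Anc c p) : False :=
  hc.2 (T.anc_antisymm h (T.anc_of_child hc))

lemma mem_Vx_of_anc_child {c p w : V} (hc : T.IsChild c p) (hw : T.Anc c w) :
    w ∈ T.Vx p := by
  refine ⟨T.anc_of_child_anc hc hw, ?_⟩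
  rintro rfl
  exact T.not_anc_child hc hw

lemma walk_to_anc : ∀ (n : ℕ) (v u : V), T.parent^[n] v = u →
    ∃ p : G.Walk v u, ∀ w ∈ p.support, T.Anc u w ∧ T.Anc w v := by
  intro n
  induction n with
  | zero =>
    intro v u h
    simp only [Function.iterate_zero_apply] at h
    subst h
    exact ⟨SimpleGraph.Walk.nil, by simp [T.anc_refl]⟩
  | succ n ih =>
    intro v u h
    by_cases hvu : v = u
    · subst hvu
      exact ⟨SimpleGraph.Walk.nil, by simp [T.anc_refl]⟩
    · have hvr : v ≠ T.root := by
        rintro rfl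
        rw [T.iterate_root] at h
        exact hvu h
      have hadj : G.Adj v (T.parent v) := (T.adj v hvr).symm
      have h' : T.parent^[n] (T.parent v) = u := by
        rw [← Function.iterate_succ_apply]; exact h
      obtain ⟨p, hp⟩ := ih (T.parent v) u h'
      refine ⟨SimpleGraph.Walk.cons hadj p, ?_⟩
      intro w hw
      rw [SimpleGraph.Walk.support_cons, List.mem_cons] at hw
      rcases hw with rfl | hw
      · exact ⟨⟨n + 1, h⟩, T.anc_refl w⟩
      · exact ⟨(hp w hw).1, T.anc_trans ⟨1, rfl⟩ (hp w hw).2⟩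

end RSTree

lemma ReachableWithin.refl {S : Set V} {v : V} (h : v ∈ S) :
    ReachableWithin G S v v :=
  ⟨SimpleGraph.Walk.nil, by simpa⟩

lemma ReachableWithin.symm {S : Set V} {v w : V} (h : ReachableWithin G S v w) :
    ReachableWithin G S w v := by
  obtain ⟨p, hp⟩ := h
  exact ⟨p.reverse, fun u hu =>
    hp u (by rwa [SimpleGraph.Walk.support_reverse, List.mem_reverse] at hu)⟩

lemma ReachableWithin.trans {S : Set V} {u v w : V}
    (h1 : ReachableWithin G S u v) (h2 : ReachableWithin G S v w) :
    ReachableWithin G S u w := by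
  obtain ⟨p, hp⟩ := h1; obtain ⟨q, hq⟩ := h2
  refine ⟨p.append q, fun z hz => ?_⟩
  rw [SimpleGraph.Walk.mem_support_append_iff] at hz
  rcases hz with hz | hz
  · exact hp z hz
  · exact hq z hz

lemma ReachableWithin.mono {S S' : Set V} {v w : V} (hS : S ⊆ S')
    (h : ReachableWithin G S v w) : ReachableWithin G S' v w := by
  obtain ⟨p, hp⟩ := h
  exact ⟨p, fun u hu => hS (hp u hu)⟩

lemma reachableWithin_adj {S : Set V} {v w : V} (h : G.Adj v w)
    (hv : v ∈ S) (hw : w ∈ S) : ReachableWithin G S v w := by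
  refine ⟨SimpleGraph.Walk.cons h SimpleGraph.Walk.nil, fun u hu => ?_⟩
  simp only [SimpleGraph.Walk.support_cons, SimpleGraph.Walk.support_nil,
    List.mem_cons, List.mem_singleton] at hu
  rcases hu with rfl | rfl | h'
  · exact hv
  · exact hw
  · exact absurd h' (by simp)

lemma reachableWithin_of_anc (T : RSTree G) {u v : V} {S : Set V} (h : T.Anc u v)
    (hS : ∀ w, T.Anc u w → T.Anc w v → w ∈ S) : ReachableWithin G S v u := by
  obtain ⟨n, hn⟩ := h
  obtain ⟨p, hp⟩ := T.walk_to_anc n v u hn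
  exact ⟨p, fun w hw => hS w (hp w hw).1 (hp w hw).2⟩

lemma compOfVert_subset {S : Set V} {v : V} : CompOfVert G S v ⊆ S := by
  rintro w ⟨p, hp⟩
  exact hp w p.end_mem_support

lemma mem_compOfVert_self {S : Set V} {v : V} (h : v ∈ S) :
    v ∈ CompOfVert G S v := ReachableWithin.refl h

lemma isCompOf_compOfVert {S : Set V} {v : V} (h : v ∈ S) :
    IsCompOf G S (CompOfVert G S v) := ⟨v, h, rfl⟩

lemma IsCompOf.subset {S C : Set V} (h : IsCompOf G S C) : C ⊆ S := by
  obtain ⟨v₀, _, rfl⟩ := h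
  rintro w ⟨p, hp⟩
  exact hp w p.end_mem_support

lemma IsCompOf.rw {S C : Set V} {a b : V} (h : IsCompOf G S C)
    (ha : a ∈ C) (hb : b ∈ C) : ReachableWithin G S a b := by
  obtain ⟨v₀, _, rfl⟩ := h
  exact ReachableWithin.trans (ReachableWithin.symm ha) hb

lemma IsCompOf.mem_of_rw {S C : Set V} {a b : V} (h : IsCompOf G S C)
    (ha : a ∈ C) (hab : ReachableWithin G S a b) : b ∈ C := by
  obtain ⟨v₀, _, rfl⟩ := h
  exact ReachableWithin.trans ha hab

lemma induce_reachable_of_rw {S : Set V} :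
    ∀ {u v : V} (p : G.Walk u v), (∀ w ∈ p.support, w ∈ S) →
    ∀ (hu : u ∈ S) (hv : v ∈ S), (G.induce S).Reachable ⟨u, hu⟩ ⟨v, hv⟩ := by
  intro u v p
  induction p with
  | nil => intro _ hu hv; exact SimpleGraph.Reachable.refl _
  | @cons a b c h q ih =>
    intro hsup hu hv
    have hb : b ∈ S := hsup b (by simp)
    have hadj : (G.induce S).Adj ⟨a, hu⟩ ⟨b, hb⟩ := h
    exact hadj.reachable.trans (ih (fun w hw => hsup w (by simp [hw])) hb hv)

lemma rw_of_induce_walk {S : Set V} :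
    ∀ {a b : ↥S} (_ : (G.induce S).Walk a b), ReachableWithin G S a.val b.val := by
  intro a b q
  induction q with
  | @nil u => exact ReachableWithin.refl u.2
  | @cons a b c h q ih =>
    exact ReachableWithin.trans (reachableWithin_adj h a.2 b.2) ih

lemma exists_crossing_edge {S P : Set V} :
    ∀ {u v : V} (p : G.Walk u v), (∀ w ∈ p.support, w ∈ S) →
    u ∈ P → v ∉ P → ∃ a b, G.Adj a b ∧ a ∈ P ∧ b ∈ S ∧ b ∉ P := by
  intro u v p
  induction p with
  | nil => intro _ hu hv; exact absurd hu hv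
  | @cons a b c h q ih =>
    intro hsup ha hc
    by_cases hb : b ∈ P
    · exact ih (fun w hw => hsup w (by simp [hw])) hb hc
    · exact ⟨a, b, h, ha, hsup b (by simp), hb⟩

end Aux

/-- Let `x, y` be a heavy pair such that `y` lies on `π(s, u_{H_x})`
strictly above `r(x)` (i.e. `y` is a proper ancestor of `r(x)`) and the tree edge
`(y, y_h)` lies on `π_x(s, H_x)`. Define `Ĉ(x,y)` as the union of all components
`C` of `G[V_x]` such that the tree edge `(y, y_h)` lies on `π_x(s,C)`. Then
`G \ {x,y}` is connected if and only if there is an edge of `G` from a vertex of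
`Ĉ(x,y) ∪ H_y` to a vertex of `V \ (Ĉ(x,y) ∪ H_y ∪ {x,y})`. -/


theorem stmt13 {V : Type*} [Fintype V] (G : SimpleGraph V) (hG : G.Connected)
    (T : RSTree G) (hch : V → V) (hhch : HchValid T hch)
    (uc vc : V → Set V → V) (hgood : GoodChoice G T uc vc)
    (x y : V) (hxy : HeavyPair T hch uc vc x y)
    (r0 : V)
    (hr1 : ∀ a : V,
      (a ∉ T.sub x ∧ ∃ b ∈ CompOfVert G (T.Vx x) (hch x), G.Adj a b) → T.Anc r0 a)
    (hr2 : ∀ w : V,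
      (∀ a : V, (a ∉ T.sub x ∧ ∃ b ∈ CompOfVert G (T.Vx x) (hch x), G.Adj a b) →
        T.Anc w a) → T.Anc w r0)
    (hy1 : T.Anc y (uc x (CompOfVert G (T.Vx x) (hch x))))
    (hy2 : T.Anc y r0) (hy3 : y ≠ r0)
    (hyh : T.Anc (hch y) (uc x (CompOfVert G (T.Vx x) (hch x)))) :
    (G.induce (({x, y} : Set V)ᶜ)).Connected ↔
      ∃ a b : V, G.Adj a b ∧
        a ∈ ({w | ∃ C, IsCompOf G (T.Vx x) C ∧ T.Anc (hch y) (uc x C) ∧ w ∈ C}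
              ∪ CompOfVert G (T.Vx y) (hch y) : Set V) ∧
        b ∉ ({w | ∃ C, IsCompOf G (T.Vx x) C ∧ T.Anc (hch y) (uc x C) ∧ w ∈ C}
              ∪ CompOfVert G (T.Vx y) (hch y) ∪ {x, y} : Set V) := by
  obtain ⟨hxr, hyr, hnxy, hnyx, hchx, hchy, hGx, hGy, hFSx, hFSy⟩ := hxy
  set S : Set V := ({x, y} : Set V)ᶜ with hSdef
  set D : Set V := {w | ∃ C, IsCompOf G (T.Vx x) C ∧ T.Anc (hch y) (uc x C) ∧ w ∈ C}
      ∪ CompOfVert G (T.Vx y) (hch y) with hDdef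
  have hmemS : ∀ w : V, w ∈ S ↔ w ≠ x ∧ w ≠ y := by
    intro w; simp [hSdef]
  have hVxS : T.Vx x ⊆ S := by
    rintro w ⟨haw, hwx⟩
    rw [hmemS]
    refine ⟨hwx, ?_⟩
    rintro rfl
    exact hnxy haw
  have hVyS : T.Vx y ⊆ S := by
    rintro w ⟨haw, hwy⟩
    rw [hmemS]
    refine ⟨?_, hwy⟩
    rintro rfl
    exact hnyx haw
  have hnotsubxy : ∀ w, T.Anc x w → T.Anc y w → False := by
    intro w h1 h2
    rcases T.anc_total h1 h2 with h | h
    · exact hnxy h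
    · exact hnyx h
  have gx := hgood x hxr hGx
  have gy := hgood y hyr hGy
  have hchyVy : hch y ∈ T.Vx y := T.mem_Vx_of_anc_child hchy (T.anc_refl _)
  have hchxVx : hch x ∈ T.Vx x := T.mem_Vx_of_anc_child hchx (T.anc_refl _)
  -- outer vertices reach the root within S
  have hroot_reach : ∀ v : V, ¬ T.Anc x v → ¬ T.Anc y v →
      ReachableWithin G S v T.root := by
    intro v hvx hvy
    refine reachableWithin_of_anc T (T.anc_root v) ?_
    intro w _ hwv
    rw [hmemS]
    constructor
    · rintro rfl; exact hvx hwv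
    · rintro rfl; exact hvy hwv
  -- tree paths inside subtrees
  have treeVy : ∀ {c w : V}, T.IsChild c y → T.Anc c w →
      ReachableWithin G (T.Vx y) w c := by
    intro c w hc hw
    exact reachableWithin_of_anc T hw (fun z hz _ => T.mem_Vx_of_anc_child hc hz)
  have treeVx : ∀ {c w : V}, T.IsChild c x → T.Anc c w →
      ReachableWithin G (T.Vx x) w c := by
    intro c w hc hw
    exact reachableWithin_of_anc T hw (fun z hz _ => T.mem_Vx_of_anc_child hc hz)
  -- r0 is a descendant of hch y
  have hHxcomp : IsCompOf G (T.Vx x) (CompOfVert G (T.Vx x) (hch x)) :=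
    isCompOf_compOfVert hchxVx
  have gHx := gx _ hHxcomp
  have hr0u : T.Anc r0 (uc x (CompOfVert G (T.Vx x) (hch x))) :=
    hr1 _ ⟨gHx.2.2, ⟨vc x _, gHx.2.1, gHx.1⟩⟩
  have hhchy_r0 : T.Anc (hch y) r0 := by
    rcases T.anc_total hyh hr0u with h | h
    · exact h
    · obtain ⟨n, hn⟩ := h
      cases n with
      | zero =>
        simp only [Function.iterate_zero_apply] at hn
        rw [← hn]
        exact T.anc_refl _
      | succ m =>
        exfalso
        rw [Function.iterate_succ_apply, hchy.1] at hn
        exact hy3 (T.anc_antisymm hy2 ⟨m, hn⟩)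
  -- every vertex of D reaches hch y within S
  have hDreach : ∀ v ∈ D, ReachableWithin G S v (hch y) := by
    intro v hv
    rcases hv with ⟨C, hC, hanc, hvC⟩ | hv
    · have gC := gx C hC
      have hucVy : uc x C ∈ T.Vx y := T.mem_Vx_of_anc_child hchy hanc
      have h1 : ReachableWithin G S v (vc x C) :=
        ReachableWithin.mono hVxS (hC.rw hvC gC.2.1)
      have h2 : ReachableWithin G S (vc x C) (uc x C) :=
        reachableWithin_adj gC.1.symm (hVxS (hC.subset gC.2.1)) (hVyS hucVy)
      have h3 : ReachableWithin G S (uc x C) (hch y) :=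
        ReachableWithin.mono hVyS (treeVy hchy hanc)
      exact (h1.trans h2).trans h3
    · exact ReachableWithin.mono hVyS
        ((isCompOf_compOfVert hchyVy).rw hv (mem_compOfVert_self hchyVy))
  -- the dichotomy for vertices outside D
  have hM : ∀ v, v ∈ S → v ∉ D → ReachableWithin G S v T.root ∨
      (ReachableWithin G S v (hch y) ∧ ReachableWithin G S (hch y) T.root) := by
    intro v hvS hvD
    rw [hDdef, Set.mem_union, not_or] at hvD
    obtain ⟨hvD1, hvD2⟩ := hvD
    by_cases hxv : T.Anc x v
    · -- v lies in the subtree of x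
      have hvVx : v ∈ T.Vx x := ⟨hxv, ((hmemS v).1 hvS).1⟩
      have hCcomp : IsCompOf G (T.Vx x) (CompOfVert G (T.Vx x) v) :=
        isCompOf_compOfVert hvVx
      set C := CompOfVert G (T.Vx x) v with hCdef
      have hvC : v ∈ C := mem_compOfVert_self hvVx
      have gC := gx C hCcomp
      have hnot : ¬ T.Anc (hch y) (uc x C) := fun h => hvD1 ⟨C, hCcomp, h, hvC⟩
      have hvreach_vc : ReachableWithin G S v (vc x C) :=
        ReachableWithin.mono hVxS (hCcomp.rw hvC gC.2.1)
      by_cases hyu : T.Anc y (uc x C)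
      · -- C is y-sensitive, hence pseudo-y-sensitive
        have hps : PseudoSens T (uc x) (vc x) (uc y) (vc y) x y C := by
          by_contra hps
          exact hnot (hFSx C hCcomp ⟨Set.mem_union_left _ hyu, hps⟩)
        obtain ⟨y₁, hy₁c, hy₁anc, hy₁path⟩ := hps
        set C₁ := CompOfVert G (T.Vx y) y₁ with hC₁def
        have hy₁Vy : y₁ ∈ T.Vx y := T.mem_Vx_of_anc_child hy₁c (T.anc_refl _)
        have hC₁comp : IsCompOf G (T.Vx y) C₁ := isCompOf_compOfVert hy₁Vy
        have huC₁ : uc x C ∈ C₁ := ReachableWithin.symm (treeVy hy₁c hy₁anc)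
        have gC₁ := gy C₁ hC₁comp
        have hucC₁x : ¬ T.Anc x (uc y C₁) := fun h => hy₁path (Set.mem_union_left _ h)
        have hucC₁root : ReachableWithin G S (uc y C₁) T.root :=
          hroot_reach _ hucC₁x (fun h => gC₁.2.2 h)
        have hu₁S : uc y C₁ ∈ S := by
          rw [hmemS]
          constructor
          · intro h; apply hucC₁x; rw [h]; exact T.anc_refl x
          · intro h; apply gC₁.2.2; rw [h]; exact T.anc_refl y
        have hreach_u : ReachableWithin G S v (uc x C) :=
          hvreach_vc.trans (reachableWithin_adj gC.1.symm
            (hVxS (hCcomp.subset gC.2.1)) (hVyS (hC₁comp.subset huC₁)))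
        by_cases hh : hch y ∈ C₁
        · right
          constructor
          · exact hreach_u.trans (ReachableWithin.mono hVyS (hC₁comp.rw huC₁ hh))
          · exact (ReachableWithin.mono hVyS (hC₁comp.rw hh gC₁.2.1)).trans
              ((reachableWithin_adj gC₁.1.symm (hVyS (hC₁comp.subset gC₁.2.1))
                hu₁S).trans hucC₁root)
        · left
          exact hreach_u.trans
            ((ReachableWithin.mono hVyS (hC₁comp.rw huC₁ gC₁.2.1)).trans
              ((reachableWithin_adj gC₁.1.symm (hVyS (hC₁comp.subset gC₁.2.1))
                hu₁S).trans hucC₁root))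
      · -- uc x C lies outside both subtrees
        left
        have hucS : uc x C ∈ S := by
          rw [hmemS]
          constructor
          · intro h; apply gC.2.2; rw [h]; exact T.anc_refl x
          · intro h; apply hyu; rw [h]; exact T.anc_refl y
        have hucroot : ReachableWithin G S (uc x C) T.root :=
          hroot_reach _ (fun h => gC.2.2 h) hyu
        exact (hvreach_vc.trans (reachableWithin_adj gC.1.symm
          (hVxS (hCcomp.subset gC.2.1)) hucS)).trans hucroot
    · by_cases hyv : T.Anc y v
      · -- v lies in the subtree of y
        have hvVy : v ∈ T.Vx y := ⟨hyv, ((hmemS v).1 hvS).2⟩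
        have hC2comp : IsCompOf G (T.Vx y) (CompOfVert G (T.Vx y) v) :=
          isCompOf_compOfVert hvVy
        set C2 := CompOfVert G (T.Vx y) v with hC2def
        have hvC2 : v ∈ C2 := mem_compOfVert_self hvVy
        have hhch_not : hch y ∉ C2 := by
          intro hh
          exact hvD2 (ReachableWithin.symm (hC2comp.rw hvC2 hh))
        have gC2 := gy C2 hC2comp
        have hvreach_vc2 : ReachableWithin G S v (vc y C2) :=
          ReachableWithin.mono hVyS (hC2comp.rw hvC2 gC2.2.1)
        by_cases hxu : T.Anc x (uc y C2)
        · by_cases hps : PseudoSens T (uc y) (vc y) (uc x) (vc x) y x C2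
          · obtain ⟨x₁, hx₁c, hx₁anc, hx₁path⟩ := hps
            set C₀ := CompOfVert G (T.Vx x) x₁ with hC₀def
            have hx₁Vx : x₁ ∈ T.Vx x := T.mem_Vx_of_anc_child hx₁c (T.anc_refl _)
            have hC₀comp : IsCompOf G (T.Vx x) C₀ := isCompOf_compOfVert hx₁Vx
            have huC₀ : uc y C2 ∈ C₀ := ReachableWithin.symm (treeVx hx₁c hx₁anc)
            have gC₀ := gx C₀ hC₀comp
            have hyu₀ : ¬ T.Anc y (uc x C₀) :=
              fun h => hx₁path (Set.mem_union_left _ h)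
            have hu₀S : uc x C₀ ∈ S := by
              rw [hmemS]
              constructor
              · intro h; apply gC₀.2.2; rw [h]; exact T.anc_refl x
              · intro h; apply hyu₀; rw [h]; exact T.anc_refl y
            have hu₀root : ReachableWithin G S (uc x C₀) T.root :=
              hroot_reach _ (fun h => gC₀.2.2 h) hyu₀
            left
            have s1 : ReachableWithin G S (vc y C2) (uc y C2) :=
              reachableWithin_adj gC2.1.symm (hVyS (hC2comp.subset gC2.2.1))
                (hVxS (hC₀comp.subset huC₀))
            have s2 : ReachableWithin G S (uc y C2) (vc x C₀) :=
              ReachableWithin.mono hVxS (hC₀comp.rw huC₀ gC₀.2.1)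
            have s3 : ReachableWithin G S (vc x C₀) (uc x C₀) :=
              reachableWithin_adj gC₀.1.symm (hVxS (hC₀comp.subset gC₀.2.1)) hu₀S
            exact hvreach_vc2.trans (s1.trans (s2.trans (s3.trans hu₀root)))
          · -- fully-x-sensitive: contradiction via r0
            exfalso
            have hfull : FullySens T (uc y) (vc y) (uc x) (vc x) y x C2 :=
              ⟨Set.mem_union_left _ hxu, hps⟩
            have hanc : T.Anc (hch x) (uc y C2) := hFSy C2 hC2comp hfull
            have hu_in_Hx : uc y C2 ∈ CompOfVert G (T.Vx x) (hch x) :=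
              ReachableWithin.symm (treeVx hchx hanc)
            have hvc2 : vc y C2 ∈ T.Vx y := hC2comp.subset gC2.2.1
            have hvc2_nx : vc y C2 ∉ T.sub x := fun h => hnotsubxy _ h hvc2.1
            have hr0vc : T.Anc r0 (vc y C2) :=
              hr1 _ ⟨hvc2_nx, ⟨uc y C2, hu_in_Hx, gC2.1.symm⟩⟩
            have hhchyvc : T.Anc (hch y) (vc y C2) := T.anc_trans hr0vc hhchy_r0
            have : hch y ∈ C2 := hC2comp.mem_of_rw gC2.2.1 (treeVy hchy hhchyvc)
            exact hhch_not this
        · -- uc y C2 lies outside both subtrees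
          left
          have hu2S : uc y C2 ∈ S := by
            rw [hmemS]
            constructor
            · intro h; apply hxu; rw [h]; exact T.anc_refl x
            · intro h; apply gC2.2.2; rw [h]; exact T.anc_refl y
          have hu2root : ReachableWithin G S (uc y C2) T.root :=
            hroot_reach _ hxu (fun h => gC2.2.2 h)
          exact hvreach_vc2.trans ((reachableWithin_adj gC2.1.symm
            (hVyS (hC2comp.subset gC2.2.1)) hu2S).trans hu2root)
      · -- v is outside both subtrees
        left
        exact hroot_reach v hxv hyv
  have hrootS : T.root ∈ S := by
    rw [hmemS]
    exact ⟨fun h => hxr h.symm, fun h => hyr h.symm⟩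
  have hrootD : T.root ∉ D := by
    rintro (⟨C, hC, _, hmem⟩ | hmem)
    · exact hxr (T.eq_root_of_anc_root (hC.subset hmem).1)
    · exact hyr (T.eq_root_of_anc_root (compOfVert_subset hmem).1)
  have hchyD : hch y ∈ D := Set.mem_union_right _ (mem_compOfVert_self hchyVy)
  have hchyS : hch y ∈ S := hVyS hchyVy
  constructor
  · intro hcon
    obtain ⟨q⟩ := hcon.preconnected ⟨hch y, hchyS⟩ ⟨T.root, hrootS⟩
    obtain ⟨p, hp⟩ := rw_of_induce_walk q
    obtain ⟨a, b, hab, haD, hbS, hbD⟩ := exists_crossing_edge p hp hchyD hrootD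
    refine ⟨a, b, hab, haD, ?_⟩
    intro hb
    rcases hb with hb | hb
    · exact hbD hb
    · exact hbS hb
  · rintro ⟨a, b, hab, haD, hbD⟩
    have hbS : b ∈ S := fun hb => hbD (Set.mem_union_right _ hb)
    have hbnD : b ∉ D := fun hb => hbD (Set.mem_union_left _ hb)
    have haS : a ∈ S := by
      rcases haD with ⟨C, hC, _, hm⟩ | hm
      · exact hVxS (hC.subset hm)
      · exact hVyS (compOfVert_subset hm)
    have hhchroot : ReachableWithin G S (hch y) T.root := by
      rcases hM b hbS hbnD with hb' | ⟨_, h⟩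
      · exact ((ReachableWithin.symm (hDreach a haD)).trans
          (reachableWithin_adj hab haS hbS)).trans hb'
      · exact h
    have hall : ∀ v ∈ S, ReachableWithin G S v T.root := by
      intro v hv
      by_cases hvD : v ∈ D
      · exact (hDreach v hvD).trans hhchroot
      · rcases hM v hv hvD with h | ⟨h1, _⟩
        · exact h
        · exact h1.trans hhchroot
    rw [SimpleGraph.connected_iff]
    refine ⟨?_, ⟨⟨T.root, hrootS⟩⟩⟩
    rintro ⟨u, hu⟩ ⟨w, hw⟩
    obtain ⟨p, hp⟩ := (hall u hu).trans (ReachableWithin.symm (hall w hw))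
    exact induce_reachable_of_rw p hp hu hw
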